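/- arXiv:2006.14300 — 2 statements merged into one kernel-verified Lean document; each statement's English description precedes it below -/
import Mathlib

section
/- Let $X_1, \dots, X_n$ be independent Bernoulli random variables with $\mathbb{P}(X_i = 1) = p_i$, $S_n = \sum_{i=1}^n X_i$, $\lambda = \sum_{i=1}^n p_i > 0$, and $N_\lambda \sim \mathrm{Poi}(\lambda)$. Then $d_{TV}(S_n, N_\lambda) \le \frac{\sum_{i=1}^n p_i^2}{\max(1, \lambda)}$. -/
/-- The Poisson pmf with parameter `l`. -/
noncomputable def poissonPMF (l : ℝ) (k : ℕ) : ℝ :=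
  Real.exp (-l) * l ^ k / (Nat.factorial k)

/-- Total variation distance between two distributions on `ℕ` (given by their pmfs). -/
noncomputable def dTV (p q : ℕ → ℝ) : ℝ := (1 / 2) * ∑' k : ℕ, |p k - q k|

/-- Convolution of two pmfs on `ℕ`: the distribution of the sum of independent rvs. -/
noncomputable def conv (p q : ℕ → ℝ) : ℕ → ℝ :=
  fun k => ∑ j ∈ Finset.range (k + 1), p j * q (k - j)

/-- The pmf of the constant random variable `0`. -/
noncomputable def delta0 : ℕ → ℝ := fun k => if k = 0 then 1 else 0

/-- Distribution of the sum `S_n = X_1 + ⋯ + X_n` of independent rvs with pmfs `p i`. -/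
noncomputable def convN {n : ℕ} (p : Fin n → ℕ → ℝ) : ℕ → ℝ :=
  (List.ofFn p).foldr conv delta0

namespace PA
open Finset

noncomputable def bern (p : ℝ) : ℕ → ℝ := fun k => if k = 0 then 1 - p else if k = 1 then p else 0

noncomputable def B (ps : List ℝ) : ℕ → ℝ := (ps.map bern).foldr conv delta0

def SuppLe (P : ℕ → ℝ) (m : ℕ) : Prop := ∀ k, m < k → P k = 0

noncomputable def Ex (P f : ℕ → ℝ) : ℝ := ∑' k, P k * f k

lemma suppLe_delta0 : SuppLe delta0 0 := by
  intro k hk; simp only [delta0]; rw [if_neg (by omega)]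

lemma B_nil : B [] = delta0 := rfl

lemma suppLe_bern (p : ℝ) : SuppLe (bern p) 1 := by
  intro k hk; simp only [bern]; rw [if_neg (by omega), if_neg (by omega)]

lemma suppLe_conv {P Q : ℕ → ℝ} {a b : ℕ} (hP : SuppLe P a) (hQ : SuppLe Q b) :
    SuppLe (conv P Q) (a + b) := by
  intro k hk
  apply Finset.sum_eq_zero
  intro j hj
  rcases lt_or_ge a j with h | h
  · rw [hP j h, zero_mul]
  · rw [hQ (k - j) (by simp at hj; omega), mul_zero]

lemma B_cons (p : ℝ) (t : List ℝ) : B (p :: t) = conv (bern p) (B t) := rfl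

lemma suppLe_B (ps : List ℝ) : SuppLe (B ps) ps.length := by
  induction ps with
  | nil => exact suppLe_delta0
  | cons p t ih =>
    rw [B_cons]
    have := suppLe_conv (suppLe_bern p) ih
    simpa [Nat.add_comm] using this

lemma bern_nonneg {p : ℝ} (h0 : 0 ≤ p) (h1 : p ≤ 1) (k : ℕ) : 0 ≤ bern p k := by
  unfold bern; split_ifs <;> linarith

lemma conv_nonneg {P Q : ℕ → ℝ} (hP : ∀ k, 0 ≤ P k) (hQ : ∀ k, 0 ≤ Q k) (k : ℕ) :
    0 ≤ conv P Q k :=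
  Finset.sum_nonneg fun j _ => mul_nonneg (hP j) (hQ (k - j))

lemma B_nonneg {ps : List ℝ} (h0 : ∀ p ∈ ps, 0 ≤ p) (h1 : ∀ p ∈ ps, p ≤ 1) (k : ℕ) :
    0 ≤ B ps k := by
  induction ps generalizing k with
  | nil => unfold B; simp only [List.map_nil, List.foldr_nil]; unfold delta0; positivity
  | cons p t ih =>
    rw [B_cons]
    exact conv_nonneg (bern_nonneg (h0 p (by simp)) (h1 p (by simp)))
      (fun j => ih (fun q hq => h0 q (by simp [hq])) (fun q hq => h1 q (by simp [hq])) j) k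

lemma Ex_eq_sum {P : ℕ → ℝ} {m : ℕ} (h : SuppLe P m) (f : ℕ → ℝ) :
    Ex P f = ∑ k ∈ Finset.range (m + 1), P k * f k := by
  apply tsum_eq_sum
  intro k hk
  rw [h k (by simpa using hk), zero_mul]

lemma conv_bern_apply (p : ℝ) (Q : ℕ → ℝ) (k : ℕ) :
    conv (bern p) Q k = (1 - p) * Q k + p * (if k = 0 then 0 else Q (k - 1)) := by
  rcases Nat.eq_zero_or_pos k with rfl | hk
  · simp [conv, bern]
  · unfold conv
    rw [← Finset.sum_subset (Finset.range_subset_range.mpr (by omega) :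
        Finset.range 2 ⊆ Finset.range (k + 1))]
    · rw [Finset.sum_range_succ, Finset.sum_range_one, if_neg (by omega : ¬ k = 0)]
      simp [bern]
    · intro j _ hj
      simp only [Finset.mem_range] at hj
      rw [show bern p j = 0 by unfold bern; rw [if_neg (by omega), if_neg (by omega)], zero_mul]

lemma Ex_conv_bern {Q : ℕ → ℝ} {m : ℕ} (hQ : SuppLe Q m) (p : ℝ) (f : ℕ → ℝ) :
    Ex (conv (bern p) Q) f = (1 - p) * Ex Q f + p * Ex Q (fun k => f (k + 1)) := by
  have hsupp : SuppLe (conv (bern p) Q) (1 + m) := suppLe_conv (suppLe_bern p) hQ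
  rw [Ex_eq_sum hsupp, Ex_eq_sum hQ, Ex_eq_sum hQ]
  have : ∀ k ∈ Finset.range (1 + m + 1), conv (bern p) Q k * f k =
      (1 - p) * (Q k * f k) + p * ((if k = 0 then 0 else Q (k-1)) * f k) := by
    intro k _; rw [conv_bern_apply]; ring
  rw [Finset.sum_congr rfl this, Finset.sum_add_distrib, ← Finset.mul_sum, ← Finset.mul_sum]
  congr 1
  · congr 1
    rw [show 1 + m + 1 = (m + 1) + 1 by ring, Finset.sum_range_succ]
    rw [hQ (m + 1) (by omega), zero_mul, add_zero]
  · congr 1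
    rw [show 1 + m + 1 = (m + 1) + 1 by ring, Finset.sum_range_succ']
    simp only [Nat.add_sub_cancel, if_neg (Nat.succ_ne_zero _)]
    simp

lemma Ex_B_one {ps : List ℝ} : Ex (B ps) (fun _ => 1) = 1 := by
  induction ps with
  | nil =>
    rw [B_nil, Ex_eq_sum suppLe_delta0]
    simp [delta0]
  | cons p t ih =>
    rw [B_cons, Ex_conv_bern (suppLe_B t)]
    rw [ih]; ring

lemma Ex_abs_le {P : ℕ → ℝ} {m : ℕ} (hs : SuppLe P m) (hP : ∀ k, 0 ≤ P k)
    (hmass : Ex P (fun _ => 1) = 1) {f : ℕ → ℝ} {c : ℝ} (hf : ∀ k, |f k| ≤ c) :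
    |Ex P f| ≤ c := by
  rw [Ex_eq_sum hs]
  calc |∑ k ∈ Finset.range (m + 1), P k * f k| ≤ ∑ k ∈ Finset.range (m + 1), |P k * f k| :=
        Finset.abs_sum_le_sum_abs _ _
    _ ≤ ∑ k ∈ Finset.range (m + 1), P k * c := by
        apply Finset.sum_le_sum
        intro k _
        rw [abs_mul, abs_of_nonneg (hP k)]
        exact mul_le_mul_of_nonneg_left (hf k) (hP k)
    _ = c := by
        rw [← Finset.sum_mul]
        have := hmass
        rw [Ex_eq_sum hs] at this
        simp only [mul_one] at this
        rw [this, one_mul]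

theorem stein_core (ps : List ℝ) (h0 : ∀ p ∈ ps, 0 ≤ p) (h1 : ∀ p ∈ ps, p ≤ 1)
    (g : ℕ → ℝ) (c : ℝ) (hc : 0 ≤ c) (hg : ∀ k, |g (k + 1) - g k| ≤ c) :
    |ps.sum * Ex (B ps) (fun k => g (k + 1)) - Ex (B ps) (fun k => (k : ℝ) * g k)|
      ≤ (ps.map (· ^ 2)).sum * c := by
  induction ps generalizing g with
  | nil =>
    simp only [List.sum_nil, List.map_nil, zero_mul]
    rw [B_nil, Ex_eq_sum suppLe_delta0]
    simp [delta0]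
  | cons p t ih =>
    have hp0 : 0 ≤ p := h0 p (by simp)
    have hp1 : p ≤ 1 := h1 p (by simp)
    have ht0 : ∀ q ∈ t, 0 ≤ q := fun q hq => h0 q (by simp [hq])
    have ht1 : ∀ q ∈ t, q ≤ 1 := fun q hq => h1 q (by simp [hq])
    set Q := B t with hQdef
    have hQs : SuppLe Q t.length := suppLe_B t
    set A1 := Ex Q (fun k => g (k + 1)) with hA1
    set A2 := Ex Q (fun k => g (k + 2)) with hA2
    set B0 := Ex Q (fun k => (k : ℝ) * g k) with hB0
    set B1 := Ex Q (fun k => (k : ℝ) * g (k + 1)) with hB1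
    set μ := t.sum with hμ
    set σ := (t.map (· ^ 2)).sum with hσ
    have E1 : Ex (B (p :: t)) (fun k => g (k + 1)) = (1 - p) * A1 + p * A2 := by
      rw [B_cons, Ex_conv_bern hQs]
    have E2 : Ex (B (p :: t)) (fun k => (k : ℝ) * g k) = (1 - p) * B0 + p * (B1 + A1) := by
      rw [B_cons, Ex_conv_bern hQs]
      have hsplit : Ex Q (fun k => ((k + 1 : ℕ) : ℝ) * g (k + 1)) = B1 + A1 := by
        rw [hB1, hA1, Ex_eq_sum hQs, Ex_eq_sum hQs, Ex_eq_sum hQs, ← Finset.sum_add_distrib]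
        refine Finset.sum_congr rfl fun k _ => ?_
        push_cast; ring
      rw [hsplit]
    have IH1 : |μ * A1 - B0| ≤ σ * c := ih ht0 ht1 g hg
    have IH2 : |μ * A2 - B1| ≤ σ * c := ih ht0 ht1 (fun k => g (k + 1)) (fun k => hg (k + 1))
    have hdiff : |A2 - A1| ≤ c := by
      have : A2 - A1 = Ex Q (fun k => g (k + 2) - g (k + 1)) := by
        rw [hA1, hA2, Ex_eq_sum hQs, Ex_eq_sum hQs, Ex_eq_sum hQs, ← Finset.sum_sub_distrib]
        exact Finset.sum_congr rfl fun k _ => by ring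
      rw [this]
      exact Ex_abs_le hQs (B_nonneg ht0 ht1) Ex_B_one (fun k => hg (k + 1))
    have key : (p :: t).sum * Ex (B (p :: t)) (fun k => g (k + 1)) -
        Ex (B (p :: t)) (fun k => (k : ℝ) * g k) =
        p ^ 2 * (A2 - A1) + (1 - p) * (μ * A1 - B0) + p * (μ * A2 - B1) := by
      rw [E1, E2, List.sum_cons, ← hμ]; ring
    rw [key]
    have : (((p :: t).map (· ^ 2)).sum : ℝ) = p ^ 2 + σ := by simp [hσ]
    rw [this]
    have b1 : |p ^ 2 * (A2 - A1)| ≤ p ^ 2 * c := by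
      rw [abs_mul, abs_of_nonneg (by positivity : (0:ℝ) ≤ p ^ 2)]
      exact mul_le_mul_of_nonneg_left hdiff (by positivity)
    have b2 : |(1 - p) * (μ * A1 - B0)| ≤ (1 - p) * (σ * c) := by
      rw [abs_mul, abs_of_nonneg (by linarith : (0:ℝ) ≤ 1 - p)]
      exact mul_le_mul_of_nonneg_left IH1 (by linarith)
    have b3 : |p * (μ * A2 - B1)| ≤ p * (σ * c) := by
      rw [abs_mul, abs_of_nonneg hp0]
      exact mul_le_mul_of_nonneg_left IH2 hp0
    have htri := abs_add_three (p ^ 2 * (A2 - A1)) ((1 - p) * (μ * A1 - B0)) (p * (μ * A2 - B1))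
    have hr : p ^ 2 * c + (1 - p) * (σ * c) + p * (σ * c) = (p ^ 2 + σ) * c := by ring
    linarith

/-! ### Poisson facts -/

lemma pmf_nonneg {l : ℝ} (hl : 0 < l) (k : ℕ) : 0 ≤ poissonPMF l k := by
  unfold poissonPMF
  have h1 := Real.exp_pos (-l)
  have h2 : (0:ℝ) < l ^ k := pow_pos hl k
  have h3 : (0:ℝ) < (Nat.factorial k : ℝ) := by exact_mod_cast Nat.factorial_pos k
  positivity

lemma pmf_zero (l : ℝ) : poissonPMF l 0 = Real.exp (-l) := by
  simp [poissonPMF]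

lemma pmf_eq (l : ℝ) : poissonPMF l = fun k => Real.exp (-l) * (l ^ k / (Nat.factorial k : ℝ)) := by
  funext k; unfold poissonPMF; ring

lemma pmf_summable (l : ℝ) : Summable (poissonPMF l) := by
  rw [pmf_eq]
  exact (Real.summable_pow_div_factorial l).mul_left _

lemma exp_tsum (x : ℝ) : Real.exp x = ∑' n : ℕ, x ^ n / (Nat.factorial n : ℝ) := by
  rw [Real.exp_eq_exp_ℝ, NormedSpace.exp_eq_tsum_div]

lemma pmf_tsum (l : ℝ) : ∑' k, poissonPMF l k = 1 := by
  rw [pmf_eq, tsum_mul_left, ← exp_tsum, ← Real.exp_add]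
  simp

lemma pmf_succ (l : ℝ) (m : ℕ) :
    ((m + 1 : ℕ) : ℝ) * poissonPMF l (m + 1) = l * poissonPMF l m := by
  unfold poissonPMF
  rw [Nat.factorial_succ]
  have h3 : ((Nat.factorial m : ℝ)) ≠ 0 := by exact_mod_cast Nat.factorial_ne_zero m
  have h4 : ((m:ℝ) + 1) ≠ 0 := by positivity
  push_cast
  field_simp
  ring

noncomputable def F (l : ℝ) (j : ℕ) : ℝ := ∑ m ∈ Finset.range (j + 1), poissonPMF l m

noncomputable def gs (l : ℝ) (i : ℕ) : ℕ → ℝ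
  | 0 => 0
  | (j + 1) => Real.exp l * (Nat.factorial j : ℝ) / l ^ (j + 1) * poissonPMF l i *
      ((if i ≤ j then (1:ℝ) else 0) - F l j)

lemma gs_zero (l : ℝ) (i : ℕ) : gs l i 0 = 0 := rfl

lemma gs_succ (l : ℝ) (i j : ℕ) : gs l i (j + 1) =
    Real.exp l * (Nat.factorial j : ℝ) / l ^ (j + 1) * poissonPMF l i *
      ((if i ≤ j then (1:ℝ) else 0) - F l j) := rfl

noncomputable def hfun (l : ℝ) (j : ℕ) : ℝ := (Nat.factorial j : ℝ) * F l j / l ^ (j + 1)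
noncomputable def Gfun (l : ℝ) (j : ℕ) : ℝ := (Nat.factorial j : ℝ) * (1 - F l j) / l ^ (j + 1)
noncomputable def T (l : ℝ) (j : ℕ) : ℝ := ∑' r, poissonPMF l (r + j)

lemma F_nonneg {l : ℝ} (hl : 0 < l) (j : ℕ) : 0 ≤ F l j :=
  Finset.sum_nonneg fun m _ => pmf_nonneg hl m

lemma F_le_one {l : ℝ} (hl : 0 < l) (j : ℕ) : F l j ≤ 1 := by
  rw [← pmf_tsum l]
  exact Summable.sum_le_tsum _ (fun i _ => pmf_nonneg hl i) (pmf_summable l)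

lemma summable_shift (l : ℝ) (j : ℕ) : Summable (fun r => poissonPMF l (r + j)) :=
  (summable_nat_add_iff j).2 (pmf_summable l)

lemma T_nonneg {l : ℝ} (hl : 0 < l) (j : ℕ) : 0 ≤ T l j :=
  tsum_nonneg fun r => pmf_nonneg hl (r + j)

lemma one_sub_F (l : ℝ) (j : ℕ) : 1 - F l j = T l (j + 1) := by
  have h := Summable.sum_add_tsum_nat_add (f := poissonPMF l) (j + 1) (pmf_summable l)
  rw [pmf_tsum] at h
  unfold F T
  linarith

lemma keyF {l : ℝ} (hl : 0 < l) (j : ℕ) :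
    l * F l j ≤ ((j : ℝ) + 1) * (F l (j + 1) - poissonPMF l 0) := by
  have h1 : l * F l j = ∑ m ∈ Finset.range (j + 1), ((m + 1 : ℕ) : ℝ) * poissonPMF l (m + 1) := by
    unfold F
    rw [Finset.mul_sum]
    exact Finset.sum_congr rfl fun m _ => (pmf_succ l m).symm
  have h2 : F l (j + 1) - poissonPMF l 0 = ∑ m ∈ Finset.range (j + 1), poissonPMF l (m + 1) := by
    unfold F
    rw [Finset.sum_range_succ' (fun k => poissonPMF l k) (j + 1)]
    ring
  rw [h1, h2, Finset.mul_sum]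
  apply Finset.sum_le_sum
  intro m hm
  simp only [Finset.mem_range] at hm
  apply mul_le_mul_of_nonneg_right _ (pmf_nonneg hl (m + 1))
  push_cast
  have : (m : ℝ) ≤ (j : ℝ) := by exact_mod_cast Nat.le_of_lt_succ hm
  linarith

lemma hfun_nonneg {l : ℝ} (hl : 0 < l) (j : ℕ) : 0 ≤ hfun l j := by
  unfold hfun
  have := F_nonneg hl j
  have h3 : (0:ℝ) ≤ (Nat.factorial j : ℝ) := by positivity
  positivity

lemma Gfun_nonneg {l : ℝ} (hl : 0 < l) (j : ℕ) : 0 ≤ Gfun l j := by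
  unfold Gfun
  have h1 : 0 ≤ 1 - F l j := by linarith [F_le_one hl j]
  have h3 : (0:ℝ) ≤ (Nat.factorial j : ℝ) := by positivity
  positivity

lemma hfun_mono {l : ℝ} (hl : 0 < l) (j : ℕ) : hfun l j ≤ hfun l (j + 1) := by
  unfold hfun
  rw [div_le_div_iff₀ (by positivity) (by positivity)]
  have key := keyF hl j
  have hπ0 : 0 ≤ poissonPMF l 0 := pmf_nonneg hl 0
  have hkey : l * F l j ≤ ((j : ℝ) + 1) * F l (j + 1) := by
    have hF1 : 0 ≤ F l (j + 1) := F_nonneg hl (j + 1)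
    nlinarith
  calc (Nat.factorial j : ℝ) * F l j * l ^ (j + 1 + 1)
      = ((Nat.factorial j : ℝ) * l ^ (j + 1)) * (l * F l j) := by rw [pow_succ]; ring
    _ ≤ ((Nat.factorial j : ℝ) * l ^ (j + 1)) * (((j : ℝ) + 1) * F l (j + 1)) := by
        apply mul_le_mul_of_nonneg_left hkey
        positivity
    _ = (Nat.factorial (j + 1) : ℝ) * F l (j + 1) * l ^ (j + 1) := by
        rw [Nat.factorial_succ]; push_cast; ring

lemma keyT {l : ℝ} (hl : 0 < l) (j : ℕ) :
    ((j : ℝ) + 1) * T l (j + 2) ≤ l * T l (j + 1) := by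
  unfold T
  rw [← tsum_mul_left, ← tsum_mul_left]
  apply Summable.tsum_le_tsum _ ((summable_shift l (j + 2)).mul_left _) ((summable_shift l (j + 1)).mul_left _)
  intro r
  have h1 : ((r + j + 2 : ℕ) : ℝ) * poissonPMF l (r + j + 2) = l * poissonPMF l (r + j + 1) := by
    have := pmf_succ l (r + j + 1)
    convert this using 3 <;> omega
  have h2 : r + (j + 2) = r + j + 2 := by omega
  have h3 : r + (j + 1) = r + j + 1 := by omega
  rw [h2, h3, ← h1]
  apply mul_le_mul_of_nonneg_right _ (pmf_nonneg hl _)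
  push_cast
  linarith

lemma Gfun_anti {l : ℝ} (hl : 0 < l) (j : ℕ) : Gfun l (j + 1) ≤ Gfun l j := by
  unfold Gfun
  rw [one_sub_F, one_sub_F]
  rw [div_le_div_iff₀ (by positivity) (by positivity)]
  have key := keyT hl j
  calc (Nat.factorial (j + 1) : ℝ) * T l (j + 1 + 1) * l ^ (j + 1)
      = ((Nat.factorial j : ℝ) * l ^ (j + 1)) * (((j : ℝ) + 1) * T l (j + 2)) := by
        rw [Nat.factorial_succ]; push_cast; ring_nf
    _ ≤ ((Nat.factorial j : ℝ) * l ^ (j + 1)) * (l * T l (j + 1)) := by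
        apply mul_le_mul_of_nonneg_left key
        positivity
    _ = (Nat.factorial j : ℝ) * T l (j + 1) * l ^ (j + 1 + 1) := by rw [pow_succ]; ring

lemma gs_of_gt {l : ℝ} {i j : ℕ} (hij : j < i) :
    gs l i (j + 1) = -(Real.exp l * poissonPMF l i * hfun l j) := by
  rw [gs_succ, if_neg (by omega)]
  unfold hfun
  ring

lemma gs_of_le {l : ℝ} {i j : ℕ} (hij : i ≤ j) :
    gs l i (j + 1) = Real.exp l * poissonPMF l i * Gfun l j := by
  rw [gs_succ, if_pos hij]
  unfold Gfun
  ring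

lemma F_succ (l : ℝ) (j : ℕ) : F l (j + 1) = F l j + poissonPMF l (j + 1) := by
  unfold F
  rw [Finset.sum_range_succ]

lemma gs_stein {l : ℝ} (hl : 0 < l) (i k : ℕ) :
    l * gs l i (k + 1) - (k : ℝ) * gs l i k = (if k = i then 1 else 0) - poissonPMF l i := by
  have hl0 : l ≠ 0 := ne_of_gt hl
  have hexp : Real.exp l ≠ 0 := Real.exp_ne_zero l
  cases k with
  | zero =>
    simp only [gs_zero, Nat.cast_zero, zero_mul, sub_zero, gs_succ, pow_one, Nat.factorial_zero,
      Nat.cast_one]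
    have hF0 : F l 0 = Real.exp (-l) := by
      unfold F
      simp [pmf_zero]
    rw [hF0]
    by_cases hi : i = 0
    · subst hi
      rw [if_pos (le_refl 0), if_pos rfl, pmf_zero, Real.exp_neg]
      field_simp
      ring
    · rw [if_neg (by omega), if_neg (fun h => hi h.symm), Real.exp_neg]
      field_simp
      ring
  | succ j =>
    have hfac : ((Nat.factorial j : ℝ)) ≠ 0 := by exact_mod_cast Nat.factorial_ne_zero j
    have hpow : l ^ (j + 1) ≠ 0 := pow_ne_zero _ hl0
    have hπ : poissonPMF l (j + 1) = Real.exp (-l) * l ^ (j + 1) / (Nat.factorial (j + 1) : ℝ) :=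
      rfl
    have hfacs : (Nat.factorial (j + 1) : ℝ) = ((j : ℝ) + 1) * (Nat.factorial j : ℝ) := by
      rw [Nat.factorial_succ]; push_cast; ring
    rcases lt_trichotomy i (j + 1) with hij | hij | hij
    · -- i ≤ j
      have hij' : i ≤ j := by omega
      rw [gs_succ, gs_succ, if_pos (by omega : i ≤ j + 1), if_pos hij', F_succ,
        if_neg (by omega : ¬ j + 1 = i), hπ]
      rw [Real.exp_neg, hfacs]
      have hj1 : ((j : ℝ) + 1) ≠ 0 := by positivity
      field_simp
      push_cast; ring
    · -- i = j + 1
      subst hij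
      rw [gs_succ, gs_succ, if_pos (le_refl _), if_neg (by omega : ¬ j + 1 ≤ j), F_succ,
        if_pos rfl, hπ]
      rw [Real.exp_neg, hfacs]
      have hj1 : ((j : ℝ) + 1) ≠ 0 := by positivity
      field_simp
      push_cast; ring
    · -- j + 1 < i
      rw [gs_succ, gs_succ, if_neg (by omega : ¬ i ≤ j + 1), if_neg (by omega : ¬ i ≤ j), F_succ,
        if_neg (by omega : ¬ j + 1 = i), hπ]
      rw [Real.exp_neg, hfacs]
      have hj1 : ((j : ℝ) + 1) ≠ 0 := by positivity
      field_simp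
      push_cast; ring

lemma D_nonpos {l : ℝ} (hl : 0 < l) {i k : ℕ} (h : i ≠ k) :
    gs l i (k + 1) - gs l i k ≤ 0 := by
  cases k with
  | zero =>
    rw [gs_zero, sub_zero, gs_of_gt (by omega : 0 < i)]
    have := pmf_nonneg hl i
    have := hfun_nonneg hl 0
    have := (Real.exp_pos l).le
    simp only [neg_nonpos]
    positivity
  | succ j =>
    rcases lt_or_ge (j + 1) i with hij | hij
    · rw [gs_of_gt (by omega : j + 1 < i), gs_of_gt (by omega : j < i)]
      have h1 := hfun_mono hl j
      have := pmf_nonneg hl i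
      have := (Real.exp_pos l).le
      have : Real.exp l * poissonPMF l i * hfun l j ≤ Real.exp l * poissonPMF l i * hfun l (j+1) := by
        apply mul_le_mul_of_nonneg_left h1
        positivity
      linarith
    · have hij' : i ≤ j := by omega
      rw [gs_of_le (by omega : i ≤ j + 1), gs_of_le hij']
      have h1 := Gfun_anti hl j
      have := pmf_nonneg hl i
      have := (Real.exp_pos l).le
      have : Real.exp l * poissonPMF l i * Gfun l (j+1) ≤ Real.exp l * poissonPMF l i * Gfun l j := by
        apply mul_le_mul_of_nonneg_left h1
        positivity
      linarith

lemma D_diag_nonneg {l : ℝ} (hl : 0 < l) (k : ℕ) : 0 ≤ gs l k (k + 1) - gs l k k := by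
  have := pmf_nonneg hl k
  have := (Real.exp_pos l).le
  cases k with
  | zero =>
    rw [gs_zero, sub_zero, gs_of_le (le_refl 0)]
    have := Gfun_nonneg hl 0
    positivity
  | succ j =>
    rw [gs_of_le (le_refl (j + 1)), gs_of_gt (by omega : j < j + 1)]
    have := Gfun_nonneg hl (j + 1)
    have := hfun_nonneg hl j
    have h1 : 0 ≤ Real.exp l * poissonPMF l (j+1) * Gfun l (j+1) := by positivity
    have h2 : 0 ≤ Real.exp l * poissonPMF l (j+1) * hfun l j := by positivity
    linarith

lemma D_diag_le {l : ℝ} (hl : 0 < l) (k : ℕ) :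
    gs l k (k + 1) - gs l k k ≤ (1 - Real.exp (-l)) / l := by
  have hl0 : l ≠ 0 := ne_of_gt hl
  have hexp : Real.exp l ≠ 0 := Real.exp_ne_zero l
  cases k with
  | zero =>
    rw [gs_zero, sub_zero, gs_of_le (le_refl 0)]
    have h1 : Gfun l 0 = (1 - F l 0) / l := by
      unfold Gfun
      simp
    have hF0 : F l 0 = Real.exp (-l) := by unfold F; simp [pmf_zero]
    rw [h1, hF0, pmf_zero, Real.exp_neg, mul_inv_cancel₀ hexp, one_mul]
  | succ j =>
    have hfac : ((Nat.factorial j : ℝ)) ≠ 0 := by exact_mod_cast Nat.factorial_ne_zero j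
    have hj1 : ((j : ℝ) + 1) ≠ 0 := by positivity
    have hpow : l ^ (j + 1) ≠ 0 := pow_ne_zero _ hl0
    have hfacs : (Nat.factorial (j + 1) : ℝ) = ((j : ℝ) + 1) * (Nat.factorial j : ℝ) := by
      rw [Nat.factorial_succ]; push_cast; ring
    rw [gs_of_le (le_refl (j + 1)), gs_of_gt (by omega : j < j + 1)]
    have hπ : poissonPMF l (j + 1) = Real.exp (-l) * l ^ (j + 1) / (Nat.factorial (j + 1) : ℝ) :=
      rfl
    have step1 : Real.exp l * poissonPMF l (j + 1) * Gfun l (j + 1) = (1 - F l (j + 1)) / l := by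
      unfold Gfun
      rw [hπ, Real.exp_neg, hfacs, pow_succ]
      field_simp
      ring
    have step2 : Real.exp l * poissonPMF l (j + 1) * hfun l j = F l j / ((j : ℝ) + 1) := by
      unfold hfun
      rw [hπ, Real.exp_neg, hfacs]
      field_simp
    rw [sub_neg_eq_add, step1, step2]
    have key := keyF hl j
    rw [pmf_zero] at key
    have h2 : F l j / ((j : ℝ) + 1) ≤ (F l (j + 1) - Real.exp (-l)) / l := by
      rw [div_le_div_iff₀ (by positivity) hl]
      nlinarith
    have h3 : (1 - F l (j + 1)) / l + (F l (j + 1) - Real.exp (-l)) / l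
        = (1 - Real.exp (-l)) / l := by ring
    linarith

lemma gs_rewrite (l : ℝ) (i j : ℕ) :
    gs l i (j + 1) = (Real.exp l * (Nat.factorial j : ℝ) / l ^ (j + 1)) *
        (if i ≤ j then poissonPMF l i else 0)
      - (Real.exp l * (Nat.factorial j : ℝ) / l ^ (j + 1) * F l j) * poissonPMF l i := by
  rw [gs_succ]
  split_ifs <;> ring

lemma summable_ind (l : ℝ) (j : ℕ) :
    Summable (fun i => if i ≤ j then poissonPMF l i else 0) := by
  apply summable_of_ne_finset_zero (s := Finset.range (j + 1))
  intro i hi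
  rw [if_neg (by simp only [Finset.mem_range] at hi; omega)]

lemma tsum_ind (l : ℝ) (j : ℕ) :
    ∑' i, (if i ≤ j then poissonPMF l i else 0) = F l j := by
  rw [tsum_eq_sum (s := Finset.range (j + 1))
    (fun i hi => if_neg (by simp only [Finset.mem_range] at hi; omega))]
  unfold F
  exact Finset.sum_congr rfl fun i hi => if_pos (by simp only [Finset.mem_range] at hi; omega)

lemma gs_summable (l : ℝ) (j : ℕ) : Summable (fun i => gs l i (j + 1)) := by
  have : (fun i => gs l i (j + 1)) = fun i =>
      (Real.exp l * (Nat.factorial j : ℝ) / l ^ (j + 1)) * (if i ≤ j then poissonPMF l i else 0)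
      - (Real.exp l * (Nat.factorial j : ℝ) / l ^ (j + 1) * F l j) * poissonPMF l i := by
    funext i; exact gs_rewrite l i j
  rw [this]
  exact ((summable_ind l j).mul_left _).sub ((pmf_summable l).mul_left _)

lemma gs_tsum (l : ℝ) (j : ℕ) : ∑' i, gs l i (j + 1) = 0 := by
  have : (fun i => gs l i (j + 1)) = fun i =>
      (Real.exp l * (Nat.factorial j : ℝ) / l ^ (j + 1)) * (if i ≤ j then poissonPMF l i else 0)
      - (Real.exp l * (Nat.factorial j : ℝ) / l ^ (j + 1) * F l j) * poissonPMF l i := by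
    funext i; exact gs_rewrite l i j
  rw [this, Summable.tsum_sub ((summable_ind l j).mul_left _) ((pmf_summable l).mul_left _),
    tsum_mul_left, tsum_mul_left, tsum_ind, pmf_tsum]
  ring

lemma D_summable (l : ℝ) (k : ℕ) : Summable (fun i => gs l i (k + 1) - gs l i k) := by
  cases k with
  | zero =>
    simp only [gs_zero, sub_zero]
    exact gs_summable l 0
  | succ j => exact (gs_summable l (j + 1)).sub (gs_summable l j)

lemma D_tsum (l : ℝ) (k : ℕ) : ∑' i, (gs l i (k + 1) - gs l i k) = 0 := by
  cases k with
  | zero =>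
    simp only [gs_zero, sub_zero]
    exact gs_tsum l 0
  | succ j =>
    rw [Summable.tsum_sub (gs_summable l (j + 1)) (gs_summable l j), gs_tsum, gs_tsum]
    ring

lemma D_A_bound {l : ℝ} (hl : 0 < l) (A : Finset ℕ) (k : ℕ) :
    |∑ i ∈ A, (gs l i (k + 1) - gs l i k)| ≤ (1 - Real.exp (-l)) / l := by
  set D : ℕ → ℝ := fun i => gs l i (k + 1) - gs l i k with hD
  have hdnn : 0 ≤ D k := D_diag_nonneg hl k
  have hdle : D k ≤ (1 - Real.exp (-l)) / l := D_diag_le hl k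
  have hnp : ∀ i, i ≠ k → D i ≤ 0 := fun i hi => D_nonpos hl hi
  -- upper bound
  have hub : ∑ i ∈ A, D i ≤ D k := by
    calc ∑ i ∈ A, D i ≤ ∑ i ∈ A, (if k = i then D k else 0) := by
          apply Finset.sum_le_sum
          intro i _
          by_cases hik : i = k
          · subst hik; rw [if_pos rfl]
          · rw [if_neg (fun h => hik h.symm)]
            exact hnp i hik
      _ = if k ∈ A then D k else 0 := Finset.sum_ite_eq A k (fun _ => D k)
      _ ≤ D k := by split_ifs <;> simp [hdnn]
  -- lower bound
  have hlb : -(D k) ≤ ∑ i ∈ A, D i := by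
    set f' : ℕ → ℝ := fun i => if i = k then 0 else D i with hf'
    have hf'np : ∀ i, f' i ≤ 0 := by
      intro i
      by_cases hik : i = k
      · simp [hf', hik]
      · simp only [hf', if_neg hik]
        exact hnp i hik
    have hf's : Summable f' := by
      have : f' = fun i => D i + (if i = k then -(D i) else 0) := by
        funext i
        by_cases hik : i = k <;> simp [hf', hik]
      rw [this]
      exact (D_summable l k).add (summable_of_ne_finset_zero (s := {k})
        (fun i hi => if_neg (by simpa using hi)))
    have hstep1 : ∑ i ∈ A, f' i ≥ ∑' i, f' i := by
      have := Summable.sum_le_tsum (f := fun i => -(f' i)) A (fun i _ => neg_nonneg.mpr (hf'np i))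
        hf's.neg
      rw [tsum_neg] at this
      simp only [Finset.sum_neg_distrib] at this
      linarith
    have hstep2 : ∑' i, f' i = -(D k) := by
      have h0 := Summable.tsum_eq_add_tsum_ite (D_summable l k) k
      rw [D_tsum l k] at h0
      simp only [hf', hD]
      linarith
    have hstep3 : ∑ i ∈ A, D i ≥ ∑ i ∈ A, f' i := by
      apply Finset.sum_le_sum
      intro i _
      by_cases hik : i = k
      · subst hik; simp [hf', hdnn]
      · simp [hf', hik]
    linarith
  simp only [hD] at hub hlb
  rw [abs_le]
  constructor <;> linarith

lemma gA_stein {l : ℝ} (hl : 0 < l) (A : Finset ℕ) (k : ℕ) :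
    l * (∑ i ∈ A, gs l i (k + 1)) - (k : ℝ) * (∑ i ∈ A, gs l i k) =
      (if k ∈ A then 1 else 0) - ∑ i ∈ A, poissonPMF l i := by
  rw [Finset.mul_sum, Finset.mul_sum, ← Finset.sum_sub_distrib]
  have : ∀ i ∈ A, l * gs l i (k + 1) - (k : ℝ) * gs l i k
      = (if k = i then 1 else 0) - poissonPMF l i := fun i _ => gs_stein hl i k
  rw [Finset.sum_congr rfl this, Finset.sum_sub_distrib, Finset.sum_ite_eq A k (fun _ => (1:ℝ))]

end PA
/-- Le Cam / Barbour–Hall type Poisson approximation bound for sums of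
independent Bernoulli random variables. -/
theorem poisson_approx_bernoulli (n : ℕ) (p : Fin n → ℝ)
    (hp0 : ∀ i, 0 ≤ p i) (hp1 : ∀ i, p i ≤ 1)
    (l : ℝ) (hl : l = ∑ i, p i) (hlpos : 0 < l) :
    dTV (convN (fun i k => if k = 0 then 1 - p i else if k = 1 then p i else 0))
        (poissonPMF l) ≤ (∑ i, (p i) ^ 2) / max 1 l := by
  classical
  have hP : convN (fun i k => if k = 0 then 1 - p i else if k = 1 then p i else 0)
      = PA.B (List.ofFn p) := by
    unfold convN PA.B
    rw [List.map_ofFn]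
    rfl
  rw [hP]
  set ps : List ℝ := List.ofFn p with hps
  set P : ℕ → ℝ := PA.B ps with hPdef
  set π : ℕ → ℝ := poissonPMF l with hπdef
  have hlen : ps.length = n := List.length_ofFn (f := p)
  have h0 : ∀ q ∈ ps, 0 ≤ q := by
    intro q hq
    rw [hps, List.mem_ofFn] at hq
    obtain ⟨i, rfl⟩ := hq
    exact hp0 i
  have h1 : ∀ q ∈ ps, q ≤ 1 := by
    intro q hq
    rw [hps, List.mem_ofFn] at hq
    obtain ⟨i, rfl⟩ := hq
    exact hp1 i
  have hsum : ps.sum = l := by rw [hps, List.sum_ofFn, hl]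
  have hsq : (ps.map (· ^ 2)).sum = ∑ i, p i ^ 2 := by
    rw [hps, List.map_ofFn, List.sum_ofFn]
    rfl
  have hsupp : PA.SuppLe P n := by rw [← hlen]; exact PA.suppLe_B ps
  have hPnn : ∀ k, 0 ≤ P k := PA.B_nonneg h0 h1
  have hmass : PA.Ex P (fun _ => 1) = 1 := PA.Ex_B_one
  have hmassfin : ∑ k ∈ Finset.range (n + 1), P k = 1 := by
    have h := hmass
    rw [PA.Ex_eq_sum hsupp] at h
    simpa using h
  have hSumP : Summable P :=
    summable_of_ne_finset_zero (s := Finset.range (n + 1))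
      (fun k hk => hsupp k (by simp only [Finset.mem_range] at hk; omega))
  have hPsum1 : ∑' k, P k = 1 := by
    rw [tsum_eq_sum (s := Finset.range (n + 1))
      (fun k hk => hsupp k (by simp only [Finset.mem_range] at hk; omega))]
    exact hmassfin
  have hπs : Summable π := PA.pmf_summable l
  have hπ1 : ∑' k, π k = 1 := PA.pmf_tsum l
  have hπnn : ∀ k, 0 ≤ π k := PA.pmf_nonneg hlpos
  set A : Finset ℕ := (Finset.range (n + 1)).filter (fun k => π k < P k) with hA
  -- Step A : dTV = ∑_{k ∈ A} (P k - π k)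
  have hsub : Summable (fun k => P k - π k) := hSumP.sub hπs
  have habs : Summable (fun k => |P k - π k|) := hsub.abs
  have hmaxs : Summable (fun k => max (P k - π k) 0) :=
    Summable.of_nonneg_of_le (fun k => le_max_right _ _)
      (fun k => max_le (le_abs_self _) (abs_nonneg _)) habs
  have hsub0 : ∑' k, (P k - π k) = 0 := by
    rw [Summable.tsum_sub hSumP hπs, hPsum1, hπ1]
    ring
  have hmaxsum : ∑' k, max (P k - π k) 0 = ∑ k ∈ A, (P k - π k) := by
    rw [tsum_eq_sum (s := Finset.range (n + 1))]
    · rw [hA, Finset.sum_filter]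
      refine Finset.sum_congr rfl fun k _ => ?_
      by_cases hk : π k < P k
      · rw [if_pos hk, max_eq_left (by linarith)]
      · rw [if_neg hk, max_eq_right (by push_neg at hk; linarith)]
    · intro k hk
      have hPk : P k = 0 := hsupp k (by simp only [Finset.mem_range] at hk; omega)
      rw [hPk]
      exact max_eq_right (by linarith [hπnn k])
  have hstepA : dTV P π = ∑ k ∈ A, (P k - π k) := by
    unfold dTV
    have h2max : (fun k => |P k - π k|) = fun k => 2 * max (P k - π k) 0 - (P k - π k) := by
      funext k
      rcases le_total (P k - π k) 0 with h | h
      · rw [max_eq_right h, abs_of_nonpos h]; ring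
      · rw [max_eq_left h, abs_of_nonneg h]; ring
    rw [h2max, Summable.tsum_sub ((hmaxs.mul_left 2)) hsub, tsum_mul_left, hmaxsum, hsub0]
    ring
  -- Step B : Stein identity
  set c : ℝ := (1 - Real.exp (-l)) / l with hc
  have hexpneg : Real.exp (-l) ≤ 1 := by
    rw [← Real.exp_zero]
    exact Real.exp_le_exp.mpr (by linarith)
  have hcnn : 0 ≤ c := div_nonneg (by linarith) hlpos.le
  set g : ℕ → ℝ := fun j => ∑ i ∈ A, PA.gs l i j with hg
  have hginc : ∀ k, |g (k + 1) - g k| ≤ c := by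
    intro k
    rw [hg]
    simp only
    rw [← Finset.sum_sub_distrib]
    exact PA.D_A_bound hlpos A k
  have e1 : l * PA.Ex P (fun k => g (k + 1)) - PA.Ex P (fun k => (k : ℝ) * g k)
      = ∑ k ∈ Finset.range (n + 1), P k * ((if k ∈ A then 1 else 0) - ∑ i ∈ A, π i) := by
    rw [PA.Ex_eq_sum hsupp, PA.Ex_eq_sum hsupp, Finset.mul_sum, ← Finset.sum_sub_distrib]
    refine Finset.sum_congr rfl fun k _ => ?_
    rw [← PA.gA_stein hlpos A k]
    simp only [hg]
    ring
  have e2 : ∑ k ∈ Finset.range (n + 1), P k * ((if k ∈ A then 1 else 0) - ∑ i ∈ A, π i)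
      = ∑ k ∈ A, (P k - π k) := by
    have hAc : ∀ k ∈ Finset.range (n + 1),
        P k * ((if k ∈ A then 1 else 0) - ∑ i ∈ A, π i)
        = (if k ∈ A then P k else 0) - P k * (∑ i ∈ A, π i) := by
      intro k _
      by_cases hk : k ∈ A
      · rw [if_pos hk, if_pos hk]; ring
      · rw [if_neg hk, if_neg hk]; ring
    rw [Finset.sum_congr rfl hAc, Finset.sum_sub_distrib, Finset.sum_ite_mem,
      Finset.inter_eq_right.mpr (Finset.filter_subset _ _), ← Finset.sum_mul, hmassfin,
      one_mul, Finset.sum_sub_distrib]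
  have hstein := PA.stein_core ps h0 h1 g c hcnn hginc
  rw [hsum, hsq] at hstein
  -- conclude
  have hfinal : dTV P π ≤ (∑ i, p i ^ 2) * c := by
    rw [hstepA, ← e2, ← e1]
    exact le_trans (le_abs_self _) hstein
  have hcle : c ≤ 1 / max 1 l := by
    rcases le_total l 1 with h | h
    · rw [max_eq_left h, hc, div_one, div_le_one hlpos]
      have := Real.add_one_le_exp (-l)
      linarith
    · rw [max_eq_right h, hc]
      rw [div_le_div_iff₀ hlpos hlpos]
      nlinarith [Real.exp_pos (-l)]
  have hsqnn : 0 ≤ ∑ i, p i ^ 2 := Finset.sum_nonneg fun i _ => sq_nonneg _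
  calc dTV P π ≤ (∑ i, p i ^ 2) * c := hfinal
    _ ≤ (∑ i, p i ^ 2) * (1 / max 1 l) := mul_le_mul_of_nonneg_left hcle hsqnn
    _ = (∑ i, p i ^ 2) / max 1 l := by rw [mul_one_div]
end

section
/- Let $h(\theta) = \sum_{k \ge 0} a_k \theta^k$ with $a_k \ge 0$, $a_0 > 0$, twice continuously differentiable near $0$. Let $X_{i,n}$, $1 \le i \le n$, be a triangular array of independent PSD random variables with parameters $\theta_{i,n}$, and $S_n = \sum_{i=1}^n X_{i,n}$. If $\max_{1\le i\le n}\theta_{i,n} \to 0$ and $\sum_{i=1}^n \theta_{i,n} \to \lambda > 0$, then $S_n$ converges in distribution to $\mathrm{Poi}(\lambda a_1/a_0)$. -/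
open Filter

lemma poisson_hasSum (l : ℝ) : HasSum (poissonPMF l) 1 := by
  have h := NormedSpace.expSeries_div_hasSum_exp l
  rw [← Real.exp_eq_exp_ℝ] at h
  have h2 := h.mul_left (Real.exp (-l))
  have he : (fun k : ℕ => Real.exp (-l) * (l ^ k / (Nat.factorial k))) = poissonPMF l := by
    funext k; simp [poissonPMF, mul_div_assoc]
  rw [he] at h2
  have : Real.exp (-l) * Real.exp l = 1 := by
    rw [← Real.exp_add]; simp
  rwa [this] at h2

lemma poisson_nonneg {l : ℝ} (hl : 0 ≤ l) (k : ℕ) : 0 ≤ poissonPMF l k := by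
  unfold poissonPMF; positivity

structure IsPMF (p : ℕ → ℝ) : Prop where
  nonneg : ∀ k, 0 ≤ p k
  summable : Summable p
  tsum_eq : ∑' k, p k = 1

lemma poisson_isPMF {l : ℝ} (hl : 0 ≤ l) : IsPMF (poissonPMF l) :=
  ⟨poisson_nonneg hl, (poisson_hasSum l).summable, (poisson_hasSum l).tsum_eq⟩

lemma conv_poisson (x y : ℝ) : conv (poissonPMF x) (poissonPMF y) = poissonPMF (x + y) := by
  funext k
  show ∑ j ∈ Finset.range (k + 1), poissonPMF x j * poissonPMF y (k - j) = _
  unfold poissonPMF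
  rw [add_pow, Finset.mul_sum, Finset.sum_div]
  apply Finset.sum_congr rfl
  intro j hj
  have hj' : j ≤ k := Finset.mem_range_succ_iff.mp hj
  have hfact : (Nat.factorial k : ℝ) =
      (Nat.choose k j : ℝ) * (Nat.factorial j) * (Nat.factorial (k - j)) := by
    exact_mod_cast (Nat.choose_mul_factorial_mul_factorial hj').symm
  have hexp : Real.exp (-(x + y)) = Real.exp (-x) * Real.exp (-y) := by
    rw [← Real.exp_add]; ring_nf
  rw [hexp, hfact]
  have h1 : (Nat.factorial j : ℝ) ≠ 0 := Nat.cast_ne_zero.mpr (Nat.factorial_ne_zero j)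
  have h2 : (Nat.factorial (k - j) : ℝ) ≠ 0 := Nat.cast_ne_zero.mpr (Nat.factorial_ne_zero _)
  have h3 : (Nat.choose k j : ℝ) ≠ 0 :=
    Nat.cast_ne_zero.mpr (Nat.choose_pos hj').ne'
  field_simp

lemma delta0_eq : delta0 = poissonPMF 0 := by
  funext k
  cases k with
  | zero => simp [delta0, poissonPMF]
  | succ k => simp [delta0, poissonPMF]

lemma convN_succ {n : ℕ} (p : Fin (n + 1) → ℕ → ℝ) :
    convN p = conv (p 0) (convN (fun i => p i.succ)) := by
  unfold convN
  rw [List.ofFn_succ]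
  rfl

lemma convN_zero (p : Fin 0 → ℕ → ℝ) : convN p = delta0 := by
  unfold convN
  simp

lemma convN_poisson : ∀ (n : ℕ) (μ : Fin n → ℝ),
    convN (fun i => poissonPMF (μ i)) = poissonPMF (∑ i, μ i) := by
  intro n
  induction n with
  | zero => intro μ; rw [convN_zero, delta0_eq]; simp
  | succ n ih =>
    intro μ
    rw [convN_succ, ih (fun i => μ i.succ), conv_poisson, Fin.sum_univ_succ]

lemma conv_nonneg' {p q : ℕ → ℝ} (hp : ∀ k, 0 ≤ p k) (hq : ∀ k, 0 ≤ q k) (k : ℕ) :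
    0 ≤ conv p q k :=
  Finset.sum_nonneg fun j _ => mul_nonneg (hp j) (hq _)

lemma summable_abs_of_summable {p : ℕ → ℝ} (hp : Summable p) :
    Summable fun k => ‖p k‖ := hp.abs

lemma conv_summable {p q : ℕ → ℝ} (hp : Summable p) (hq : Summable q) :
    Summable (conv p q) := by
  have hp' : Summable (fun k => ‖p k‖) := hp.abs
  have hq' : Summable (fun k => ‖q k‖) := hq.abs
  have h := summable_norm_sum_mul_range_of_summable_norm hp' hq'
  exact h.of_norm

lemma conv_tsum {p q : ℕ → ℝ} (hp : Summable p) (hq : Summable q) :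
    ∑' k, conv p q k = (∑' k, p k) * (∑' k, q k) := by
  have hp' : Summable (fun k => ‖p k‖) := hp.abs
  have hq' : Summable (fun k => ‖q k‖) := hq.abs
  exact (tsum_mul_tsum_eq_tsum_sum_range_of_summable_norm hp' hq').symm

lemma conv_comm (p q : ℕ → ℝ) : conv p q = conv q p := by
  funext k
  show ∑ j ∈ Finset.range (k + 1), p j * q (k - j) =
    ∑ j ∈ Finset.range (k + 1), q j * p (k - j)
  rw [← Finset.sum_range_reflect (fun j => p j * q (k - j)) (k + 1)]
  apply Finset.sum_congr rfl
  intro j hj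
  have hj' : j ≤ k := Finset.mem_range_succ_iff.mp hj
  have h1 : k + 1 - 1 - j = k - j := by omega
  have h2 : k - (k - j) = j := by omega
  rw [h1, h2, mul_comm]

lemma IsPMF.conv {p q : ℕ → ℝ} (hp : IsPMF p) (hq : IsPMF q) : IsPMF (conv p q) :=
  ⟨conv_nonneg' hp.nonneg hq.nonneg, conv_summable hp.summable hq.summable, by
    rw [conv_tsum hp.summable hq.summable, hp.tsum_eq, hq.tsum_eq, mul_one]⟩

lemma step_bound {p q r : ℕ → ℝ} (hp : Summable p) (hq : Summable q)
    (hr0 : ∀ k, 0 ≤ r k) (hrs : Summable r) (hr1 : ∑' k, r k = 1) :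
    Summable (fun k => |conv p r k - conv q r k|) ∧
    ∑' k, |conv p r k - conv q r k| ≤ ∑' k, |p k - q k| := by
  have hpq : Summable (fun k => |p k - q k|) := (hp.sub hq).abs
  have hconv : Summable (conv (fun k => |p k - q k|) r) := conv_summable hpq hrs
  have hbound : ∀ k, |conv p r k - conv q r k| ≤ conv (fun k => |p k - q k|) r k := by
    intro k
    show |∑ j ∈ Finset.range (k+1), p j * r (k-j) - ∑ j ∈ Finset.range (k+1), q j * r (k-j)| ≤
      ∑ j ∈ Finset.range (k+1), |p j - q j| * r (k-j)
    rw [← Finset.sum_sub_distrib]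
    refine (Finset.abs_sum_le_sum_abs _ _).trans ?_
    apply Finset.sum_le_sum
    intro j _
    rw [← sub_mul, abs_mul, abs_of_nonneg (hr0 _)]
  have hs : Summable (fun k => |conv p r k - conv q r k|) :=
    Summable.of_nonneg_of_le (fun k => abs_nonneg _) hbound hconv
  refine ⟨hs, ?_⟩
  calc ∑' k, |conv p r k - conv q r k| ≤ ∑' k, conv (fun k => |p k - q k|) r k :=
        Summable.tsum_le_tsum hbound hs hconv
    _ = (∑' k, |p k - q k|) * (∑' k, r k) := conv_tsum hpq hrs
    _ = ∑' k, |p k - q k| := by rw [hr1, mul_one]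

lemma isPMF_delta0 : IsPMF delta0 := by
  rw [delta0_eq]; exact poisson_isPMF le_rfl

lemma convN_isPMF : ∀ (n : ℕ) (p : Fin n → ℕ → ℝ), (∀ i, IsPMF (p i)) → IsPMF (convN p) := by
  intro n
  induction n with
  | zero => intro p _; rw [convN_zero]; exact isPMF_delta0
  | succ n ih =>
    intro p hp
    rw [convN_succ]
    exact (hp 0).conv (ih _ fun i => hp i.succ)

lemma convN_bound : ∀ (n : ℕ) (p q : Fin n → ℕ → ℝ),
    (∀ i, IsPMF (p i)) → (∀ i, IsPMF (q i)) →
    Summable (fun k => |convN p k - convN q k|) ∧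
    ∑' k, |convN p k - convN q k| ≤ ∑ i, ∑' k, |p i k - q i k| := by
  intro n
  induction n with
  | zero =>
    intro p q _ _
    rw [convN_zero, convN_zero]
    constructor
    · simpa using summable_zero
    · simp
  | succ n ih =>
    intro p q hp hq
    have hP := convN_isPMF n _ fun i => hp i.succ
    have hQ := convN_isPMF n _ fun i => hq i.succ
    obtain ⟨ihs, ihb⟩ := ih _ _ (fun i => hp i.succ) (fun i => hq i.succ)
    rw [convN_succ p, convN_succ q]
    set P := convN fun i => p i.succ
    set Q := convN fun i => q i.succ
    -- A: conv (p 0) P vs conv (p 0) Q; B: conv (p 0) Q vs conv (q 0) Q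
    have hA := step_bound hP.summable hQ.summable (hp 0).nonneg (hp 0).summable (hp 0).tsum_eq
    have hB := step_bound (hp 0).summable (hq 0).summable hQ.nonneg hQ.summable hQ.tsum_eq
    have hcommP : conv (p 0) P = conv P (p 0) := conv_comm _ _
    have hcommQ : conv (p 0) Q = conv Q (p 0) := conv_comm _ _
    have htri : ∀ k, |conv (p 0) P k - conv (q 0) Q k| ≤
        |conv P (p 0) k - conv Q (p 0) k| + |conv (p 0) Q k - conv (q 0) Q k| := by
      intro k
      calc |conv (p 0) P k - conv (q 0) Q k|
          ≤ |conv (p 0) P k - conv (p 0) Q k| + |conv (p 0) Q k - conv (q 0) Q k| :=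
            abs_sub_le _ _ _
        _ = |conv P (p 0) k - conv Q (p 0) k| + |conv (p 0) Q k - conv (q 0) Q k| := by
            rw [hcommP, hcommQ]
    have hsum2 : Summable (fun k => |conv P (p 0) k - conv Q (p 0) k| +
        |conv (p 0) Q k - conv (q 0) Q k|) := hA.1.add hB.1
    have hs : Summable (fun k => |conv (p 0) P k - conv (q 0) Q k|) :=
      Summable.of_nonneg_of_le (fun k => abs_nonneg _) htri hsum2
    refine ⟨hs, ?_⟩
    calc ∑' k, |conv (p 0) P k - conv (q 0) Q k|
        ≤ ∑' k, (|conv P (p 0) k - conv Q (p 0) k| + |conv (p 0) Q k - conv (q 0) Q k|) :=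
          Summable.tsum_le_tsum htri hs hsum2
      _ = (∑' k, |conv P (p 0) k - conv Q (p 0) k|) +
          ∑' k, |conv (p 0) Q k - conv (q 0) Q k| := Summable.tsum_add hA.1 hB.1
      _ ≤ (∑' k, |P k - Q k|) + ∑' k, |p 0 k - q 0 k| := add_le_add hA.2 hB.2
      _ ≤ (∑ i : Fin n, ∑' k, |p i.succ k - q i.succ k|) + ∑' k, |p 0 k - q 0 k| := by
          exact add_le_add_left ihb _
      _ = ∑ i : Fin (n+1), ∑' k, |p i k - q i k| := by
          rw [Fin.sum_univ_succ]; ring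

lemma exp_neg_bound {x : ℝ} (hx : 0 ≤ x) : |Real.exp (-x) - (1 - x)| ≤ x ^ 2 := by
  have h1 : 1 - x ≤ Real.exp (-x) := by have := Real.add_one_le_exp (-x); linarith
  have h2 : Real.exp (-x) * (1 + x) ≤ 1 := by
    have h3 : 1 + x ≤ Real.exp x := by have := Real.add_one_le_exp x; linarith
    have h4 : Real.exp (-x) * (1 + x) ≤ Real.exp (-x) * Real.exp x :=
      mul_le_mul_of_nonneg_left h3 (le_of_lt (Real.exp_pos _))
    rwa [← Real.exp_add, neg_add_cancel, Real.exp_zero] at h4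
  have h5 : x * (1 - x) ≤ x * Real.exp (-x) := mul_le_mul_of_nonneg_left h1 hx
  rw [abs_le]
  constructor <;> nlinarith

lemma one_sub_exp_le {x : ℝ} : 1 - Real.exp (-x) ≤ x := by
  have := Real.add_one_le_exp (-x); linarith

lemma exp_tail_bound {x : ℝ} (hx : 0 ≤ x) : 1 - Real.exp (-x) * (1 + x) ≤ x ^ 2 := by
  have h1 : 1 - x ≤ Real.exp (-x) := by have := Real.add_one_le_exp (-x); linarith
  nlinarith

lemma psd_est (a : ℕ → ℝ) (ha : ∀ k, 0 ≤ a k) (ha0 : 0 < a 0)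
    (θ0 : ℝ) (hθ0 : 0 < θ0) (hθ1 : θ0 ≤ 1)
    (hs0 : Summable (fun k : ℕ => a k * θ0 ^ k))
    (x : ℝ) (hx : 0 < x) (hxθ : x ≤ θ0) :
    IsPMF (fun k => a k * x ^ k / (∑' j : ℕ, a j * x ^ j)) ∧
    Summable (fun k =>
      |a k * x ^ k / (∑' j : ℕ, a j * x ^ j) - poissonPMF (a 1 / a 0 * x) k|) ∧
    ∑' k, |a k * x ^ k / (∑' j : ℕ, a j * x ^ j) - poissonPMF (a 1 / a 0 * x) k| ≤
      (((∑' k : ℕ, a (k + 2) * θ0 ^ k) + (a 1 / a 0) * a 1 +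
          (a 1 / a 0) * (∑' k : ℕ, a (k + 2) * θ0 ^ k)) / a 0 + (a 1 / a 0) ^ 2 +
        (a 1 * (a 1 + (∑' k : ℕ, a (k + 2) * θ0 ^ k)) / a 0 ^ 2 + (a 1 / a 0) ^ 2) +
        (∑' k : ℕ, a (k + 2) * θ0 ^ k) / a 0 + (a 1 / a 0) ^ 2) * x ^ 2 := by
  set c : ℝ := a 1 / a 0 with hc_def
  set B : ℝ := ∑' k : ℕ, a (k + 2) * θ0 ^ k with hB_def
  have hc0 : 0 ≤ c := div_nonneg (ha 1) ha0.le
  -- summability at x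
  have hsx : Summable (fun k : ℕ => a k * x ^ k) := by
    apply Summable.of_nonneg_of_le (fun k => mul_nonneg (ha k) (pow_nonneg hx.le k))
      (fun k => mul_le_mul_of_nonneg_left (pow_le_pow_left₀ hx.le hxθ k) (ha k)) hs0
  set h : ℝ := ∑' j : ℕ, a j * x ^ j with hh_def
  -- shifted summability
  have hsx2 : Summable (fun k : ℕ => a (k + 2) * x ^ (k + 2)) :=
    (summable_nat_add_iff (f := fun k : ℕ => a k * x ^ k) 2).mpr hsx
  have hs02 : Summable (fun k : ℕ => a (k + 2) * θ0 ^ (k + 2)) :=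
    (summable_nat_add_iff (f := fun k : ℕ => a k * θ0 ^ k) 2).mpr hs0
  have hs0B : Summable (fun k : ℕ => a (k + 2) * θ0 ^ k) := by
    have he : (fun k : ℕ => a (k + 2) * θ0 ^ k) =
        fun k : ℕ => a (k + 2) * θ0 ^ (k + 2) / θ0 ^ 2 := by
      funext k
      rw [pow_add]
      field_simp
    rw [he]
    exact hs02.div_const _
  set T : ℝ := ∑' k : ℕ, a (k + 2) * x ^ (k + 2) with hT_def
  have hT0 : 0 ≤ T := tsum_nonneg fun k => mul_nonneg (ha _) (pow_nonneg hx.le _)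
  have hB0 : 0 ≤ B := tsum_nonneg fun k => mul_nonneg (ha _) (pow_nonneg hθ0.le _)
  -- split of h
  have hsplit : h = a 0 + a 1 * x + T := by
    rw [hh_def, ← Summable.sum_add_tsum_nat_add 2 hsx]
    simp [Finset.sum_range_succ, hT_def]
  -- T ≤ B x^2
  have hsBx : Summable (fun k : ℕ => a (k + 2) * θ0 ^ k * x ^ 2) := hs0B.mul_right _
  have hTB : T ≤ B * x ^ 2 := by
    rw [hT_def, hB_def, ← tsum_mul_right]
    apply Summable.tsum_le_tsum _ hsx2 hsBx
    intro k
    have : x ^ (k + 2) = x ^ k * x ^ 2 := by rw [pow_add]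
    rw [this, ← mul_assoc]
    apply mul_le_mul_of_nonneg_right _ (pow_nonneg hx.le 2)
    exact mul_le_mul_of_nonneg_left (pow_le_pow_left₀ hx.le hxθ k) (ha _)
  have hha : a 0 ≤ h := by
    have := mul_nonneg (ha 1) hx.le
    linarith [hsplit]
  have hpos : 0 < h := lt_of_lt_of_le ha0 hha
  -- p is a PMF
  have hpmf : IsPMF (fun k => a k * x ^ k / h) := by
    refine ⟨fun k => div_nonneg (mul_nonneg (ha k) (pow_nonneg hx.le k)) hpos.le,
      hsx.div_const _, ?_⟩
    rw [tsum_div_const, ← hh_def, div_self hpos.ne']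
  set y : ℝ := c * x with hy_def
  have hy0 : 0 ≤ y := mul_nonneg hc0 hx.le
  have hqpmf : IsPMF (poissonPMF y) := poisson_isPMF hy0
  have habs : Summable (fun k =>
      |a k * x ^ k / h - poissonPMF y k|) := (hpmf.summable.sub hqpmf.summable).abs
  clear_value c B h T y
  refine ⟨hpmf, habs, ?_⟩
  -- p and q values
  have hp0 : a 0 * x ^ 0 / h = a 0 / h := by norm_num
  have hp1 : a 1 * x ^ 1 / h = a 1 * x / h := by norm_num
  have hq0 : poissonPMF y 0 = Real.exp (-y) := by simp [poissonPMF]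
  have hq1 : poissonPMF y 1 = Real.exp (-y) * y := by simp [poissonPMF]
  -- key first-term estimates
  have hya : y * a 0 = a 1 * x := by
    rw [hy_def, hc_def]; field_simp
  have e1 : |a 0 / h - Real.exp (-y)| ≤ ((B + c * a 1 + c * B) / a 0 + c ^ 2) * x ^ 2 := by
    have key : a 0 / h - (1 - y) = (-T + y * (a 1 * x + T)) / h := by
      field_simp
      nlinarith [hsplit, hya]
    have hnum : |-T + y * (a 1 * x + T)| ≤ (B + c * a 1 + c * B) * x ^ 2 := by
      have hy2 : 0 ≤ y * (a 1 * x + T) :=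
        mul_nonneg hy0 (add_nonneg (mul_nonneg (ha 1) hx.le) hT0)
      have hbd : y * (a 1 * x + T) ≤ (c * a 1 + c * B) * x ^ 2 := by
        have hx1 : x ≤ 1 := le_trans hxθ hθ1
        have h6 : a 1 * x + T ≤ a 1 * x + B * x ^ 2 := by linarith
        have h7 : x ^ 2 * x ≤ x ^ 2 * 1 := mul_le_mul_of_nonneg_left hx1 (sq_nonneg x)
        calc y * (a 1 * x + T) ≤ y * (a 1 * x + B * x ^ 2) :=
              mul_le_mul_of_nonneg_left h6 hy0
          _ = c * a 1 * x ^ 2 + c * B * (x ^ 2 * x) := by rw [hy_def]; ring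
          _ ≤ c * a 1 * x ^ 2 + c * B * (x ^ 2 * 1) :=
              add_le_add_right (mul_le_mul_of_nonneg_left h7 (mul_nonneg hc0 hB0)) _
          _ = (c * a 1 + c * B) * x ^ 2 := by ring
      rw [abs_le]
      constructor <;> nlinarith
    have hP0 : |a 0 / h - (1 - y)| ≤ ((B + c * a 1 + c * B) * x ^ 2) / a 0 := by
      rw [key, abs_div, abs_of_pos hpos]
      have hKnn : 0 ≤ (B + c * a 1 + c * B) * x ^ 2 :=
        mul_nonneg (add_nonneg (add_nonneg hB0 (mul_nonneg hc0 (ha 1)))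
          (mul_nonneg hc0 hB0)) (sq_nonneg x)
      exact div_le_div₀ hKnn hnum ha0 hha
    have hQ0 : |Real.exp (-y) - (1 - y)| ≤ y ^ 2 := exp_neg_bound hy0
    have hyx : y ^ 2 = c ^ 2 * x ^ 2 := by rw [hy_def]; ring
    calc |a 0 / h - Real.exp (-y)| ≤
        |a 0 / h - (1 - y)| + |Real.exp (-y) - (1 - y)| := by
          have := abs_sub_le (a 0 / h) (1 - y) (Real.exp (-y))
          rwa [abs_sub_comm (1 - y) (Real.exp (-y))] at this
      _ ≤ ((B + c * a 1 + c * B) * x ^ 2) / a 0 + c ^ 2 * x ^ 2 := by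
          rw [← hyx]; exact add_le_add hP0 hQ0
      _ = ((B + c * a 1 + c * B) / a 0 + c ^ 2) * x ^ 2 := by ring
  have e2 : |a 1 * x / h - Real.exp (-y) * y| ≤
      (a 1 * (a 1 + B) / a 0 ^ 2 + c ^ 2) * x ^ 2 := by
    have hstep : a 1 * x / h - Real.exp (-y) * y = x * (a 1 / h - c * Real.exp (-y)) := by
      rw [hy_def]; field_simp
    have hA : |a 1 / h - c| ≤ a 1 * (a 1 + B) * x / a 0 ^ 2 := by
      have key2 : a 1 / h - c = a 1 * (a 0 - h) / (h * a 0) := by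
        rw [hc_def]; field_simp
      rw [key2, abs_div, abs_of_pos (mul_pos hpos ha0)]
      have hn : |a 1 * (a 0 - h)| = a 1 * (h - a 0) := by
        rw [abs_mul, abs_of_nonneg (ha 1), abs_of_nonpos (by linarith)]
        ring
      rw [hn]
      have hx1 : x ≤ 1 := le_trans hxθ hθ1
      have hha2 : h - a 0 ≤ (a 1 + B) * x := by
        have hb1 : B * x ^ 2 ≤ B * x * 1 := by
          have := mul_le_mul_of_nonneg_left hx1 (mul_nonneg hB0 hx.le)
          calc B * x ^ 2 = B * x * x := by ring
            _ ≤ B * x * 1 := by linarith [mul_le_mul_of_nonneg_left hx1 (mul_nonneg hB0 hx.le)]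
        have hTx : T ≤ B * x := by linarith
        have := mul_nonneg (ha 1) hx.le
        linarith [hsplit]
      have h1 : a 1 * (h - a 0) ≤ a 1 * ((a 1 + B) * x) :=
        mul_le_mul_of_nonneg_left hha2 (ha 1)
      have h2 : a 0 ^ 2 ≤ h * a 0 := by
        have := mul_le_mul_of_nonneg_right hha ha0.le
        calc a 0 ^ 2 = a 0 * a 0 := sq (a 0) ▸ by ring
          _ ≤ h * a 0 := this
      have hnn : 0 ≤ a 1 * ((a 1 + B) * x) :=
        mul_nonneg (ha 1) (mul_nonneg (add_nonneg (ha 1) hB0) hx.le)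
      calc a 1 * (h - a 0) / (h * a 0) ≤ a 1 * ((a 1 + B) * x) / (h * a 0) :=
            div_le_div₀ hnn h1 (mul_pos hpos ha0) le_rfl
        _ ≤ a 1 * ((a 1 + B) * x) / a 0 ^ 2 :=
            div_le_div₀ hnn le_rfl (by positivity) h2
        _ = a 1 * (a 1 + B) * x / a 0 ^ 2 := by ring_nf
    have hBq : |c - c * Real.exp (-y)| ≤ c ^ 2 * x := by
      have : c - c * Real.exp (-y) = c * (1 - Real.exp (-y)) := by ring
      rw [this, abs_mul, abs_of_nonneg hc0]
      have hle1 : Real.exp (-y) ≤ 1 := Real.exp_le_one_iff.mpr (by linarith)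
      have h1 : |1 - Real.exp (-y)| = 1 - Real.exp (-y) := abs_of_nonneg (by linarith)
      rw [h1]
      have h2 := @one_sub_exp_le y
      have h3 : c * (1 - Real.exp (-y)) ≤ c * y := mul_le_mul_of_nonneg_left h2 hc0
      have : c * y = c ^ 2 * x := by rw [hy_def]; ring
      linarith
    have htri := abs_sub_le (a 1 / h) c (c * Real.exp (-y))
    have : |a 1 / h - c * Real.exp (-y)| ≤
        a 1 * (a 1 + B) * x / a 0 ^ 2 + c ^ 2 * x := le_trans htri (add_le_add hA hBq)
    calc |a 1 * x / h - Real.exp (-y) * y| = x * |a 1 / h - c * Real.exp (-y)| := by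
          rw [hstep, abs_mul, abs_of_pos hx]
      _ ≤ x * (a 1 * (a 1 + B) * x / a 0 ^ 2 + c ^ 2 * x) :=
          mul_le_mul_of_nonneg_left this hx.le
      _ = (a 1 * (a 1 + B) / a 0 ^ 2 + c ^ 2) * x ^ 2 := by ring
  -- tail estimates
  have habs2 : Summable (fun k => |a (k + 2) * x ^ (k + 2) / h - poissonPMF y (k + 2)|) :=
    (summable_nat_add_iff (f := fun k => |a k * x ^ k / h - poissonPMF y k|) 2).mpr habs
  have hps2 : Summable (fun k => a (k + 2) * x ^ (k + 2) / h) :=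
    (summable_nat_add_iff (f := fun k => a k * x ^ k / h) 2).mpr hpmf.summable
  have hqs2 : Summable (fun k => poissonPMF y (k + 2)) :=
    (summable_nat_add_iff (f := fun k => poissonPMF y k) 2).mpr hqpmf.summable
  have hsplitp : ∑' k, a (k + 2) * x ^ (k + 2) / h = T / h := by
    rw [tsum_div_const, ← hT_def]
  have htailp : ∑' (k : ℕ), a (k + 2) * x ^ (k + 2) / h ≤ B / a 0 * x ^ 2 := by
    rw [hsplitp]
    calc T / h ≤ B * x ^ 2 / a 0 := div_le_div₀ (mul_nonneg hB0 (sq_nonneg x)) hTB ha0 hha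
      _ = B / a 0 * x ^ 2 := by ring
  have htailq : ∑' (k : ℕ), poissonPMF y (k + 2) ≤ c ^ 2 * x ^ 2 := by
    have hq2 := Summable.sum_add_tsum_nat_add (f := poissonPMF y) 2 hqpmf.summable
    rw [hqpmf.tsum_eq] at hq2
    have hsum2 : ∑ i ∈ Finset.range 2, poissonPMF y i =
        Real.exp (-y) + Real.exp (-y) * y := by
      simp [Finset.sum_range_succ, hq0, hq1]
    rw [hsum2] at hq2
    have htb := exp_tail_bound hy0
    have hexpand : Real.exp (-y) * (1 + y) = Real.exp (-y) + Real.exp (-y) * y := by ring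
    have hyx : y ^ 2 = c ^ 2 * x ^ 2 := by rw [hy_def]; ring
    linarith
  have hpoint : ∀ k, |a (k + 2) * x ^ (k + 2) / h - poissonPMF y (k + 2)| ≤
      a (k + 2) * x ^ (k + 2) / h + poissonPMF y (k + 2) := by
    intro k
    have h1 : 0 ≤ a (k + 2) * x ^ (k + 2) / h := hpmf.nonneg (k + 2)
    have h2 : 0 ≤ poissonPMF y (k + 2) := hqpmf.nonneg _
    rw [sub_eq_add_neg]
    refine (abs_add_le _ _).trans ?_
    rw [abs_neg, abs_of_nonneg h1, abs_of_nonneg h2]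
  have e3 : ∑' (k : ℕ), |a (k + 2) * x ^ (k + 2) / h - poissonPMF y (k + 2)| ≤
      B / a 0 * x ^ 2 + c ^ 2 * x ^ 2 := by
    calc ∑' (k : ℕ), |a (k + 2) * x ^ (k + 2) / h - poissonPMF y (k + 2)|
        ≤ ∑' (k : ℕ), (a (k + 2) * x ^ (k + 2) / h + poissonPMF y (k + 2)) :=
          Summable.tsum_le_tsum hpoint habs2 (hps2.add hqs2)
      _ = (∑' (k : ℕ), a (k + 2) * x ^ (k + 2) / h) + ∑' (k : ℕ), poissonPMF y (k + 2) :=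
          Summable.tsum_add hps2 hqs2
      _ ≤ B / a 0 * x ^ 2 + c ^ 2 * x ^ 2 := add_le_add htailp htailq
  have hsplit_abs := Summable.sum_add_tsum_nat_add
    (f := fun k => |a k * x ^ k / h - poissonPMF y k|) 2 habs
  have hfront : ∑ i ∈ Finset.range 2, |a i * x ^ i / h - poissonPMF y i| =
      |a 0 / h - Real.exp (-y)| + |a 1 * x / h - Real.exp (-y) * y| := by
    simp [Finset.sum_range_succ, hq0, hq1]
  rw [← hsplit_abs, hfront]
  calc |a 0 / h - Real.exp (-y)| + |a 1 * x / h - Real.exp (-y) * y| +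
        ∑' (i : ℕ), |a (i + 2) * x ^ (i + 2) / h - poissonPMF y (i + 2)|
      ≤ ((B + c * a 1 + c * B) / a 0 + c ^ 2) * x ^ 2 +
        (a 1 * (a 1 + B) / a 0 ^ 2 + c ^ 2) * x ^ 2 +
        (B / a 0 * x ^ 2 + c ^ 2 * x ^ 2) := add_le_add (add_le_add e1 e2) e3
    _ = ((B + c * a 1 + c * B) / a 0 + c ^ 2 +
        (a 1 * (a 1 + B) / a 0 ^ 2 + c ^ 2) + B / a 0 + c ^ 2) * x ^ 2 := by ring

/-- Poisson limit theorem (Pérez-Abreu) for triangular arrays of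
independent PSD random variables: `S_n` converges in distribution to
`Poi(λ a₁ / a₀)` (for ℕ-valued random variables, convergence in distribution is
equivalent to pointwise convergence of the pmfs). -/
theorem psd_poisson_limit (a : ℕ → ℝ) (r l : ℝ)
    (θ : (n : ℕ) → Fin n → ℝ)
    (ha : ∀ k, 0 ≤ a k) (ha0 : 0 < a 0) (hr : 0 < r) (hl : 0 < l)
    (hsum : ∀ x : ℝ, 0 ≤ x → x < r → Summable (fun k : ℕ => a k * x ^ k))
    (hsum' : ∀ x : ℝ, 0 ≤ x → x < r →
      Summable (fun k : ℕ => (k : ℝ) * a k * x ^ (k - 1)))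
    (hsum'' : ∀ x : ℝ, 0 ≤ x → x < r →
      Summable (fun k : ℕ => (k : ℝ) * ((k : ℝ) - 1) * a k * x ^ (k - 2)))
    (hθpos : ∀ n i, 0 < θ n i)
    (hmax : ∀ ε : ℝ, 0 < ε → ∃ N : ℕ, ∀ n ≥ N, ∀ i : Fin n, θ n i < ε)
    (htot : Tendsto (fun n : ℕ => ∑ i : Fin n, θ n i) atTop (nhds l)) :
    ∀ m : ℕ, Tendsto
      (fun n : ℕ =>
        convN (fun i k => a k * θ n i ^ k / (∑' j : ℕ, a j * θ n i ^ j)) m)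
      atTop (nhds (poissonPMF (l * a 1 / a 0) m)) := by
  intro m
  have hc0 : 0 ≤ a 1 / a 0 := div_nonneg (ha 1) ha0.le
  have hθ0 : (0 : ℝ) < min (r / 2) 1 := lt_min (by linarith) one_pos
  have hθ1 : min (r / 2) 1 ≤ 1 := min_le_right _ _
  have hθr : min (r / 2) 1 < r := lt_of_le_of_lt (min_le_left _ _) (by linarith)
  have hs0 : Summable (fun k : ℕ => a k * (min (r / 2) 1) ^ k) := hsum _ hθ0.le hθr
  -- package the per-term estimate with an abstract constant K
  obtain ⟨K, hK0, hKest⟩ : ∃ K : ℝ, 0 ≤ K ∧ ∀ x : ℝ, 0 < x → x ≤ min (r / 2) 1 →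
      IsPMF (fun k => a k * x ^ k / (∑' j : ℕ, a j * x ^ j)) ∧
      Summable (fun k =>
        |a k * x ^ k / (∑' j : ℕ, a j * x ^ j) - poissonPMF (a 1 / a 0 * x) k|) ∧
      ∑' k, |a k * x ^ k / (∑' j : ℕ, a j * x ^ j) - poissonPMF (a 1 / a 0 * x) k| ≤
        K * x ^ 2 := by
    set B : ℝ := ∑' k : ℕ, a (k + 2) * (min (r / 2) 1) ^ k with hB_def
    have hB0 : 0 ≤ B := tsum_nonneg fun k => mul_nonneg (ha _) (pow_nonneg hθ0.le _)
    refine ⟨(B + (a 1 / a 0) * a 1 + (a 1 / a 0) * B) / a 0 + (a 1 / a 0) ^ 2 +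
      (a 1 * (a 1 + B) / a 0 ^ 2 + (a 1 / a 0) ^ 2) + B / a 0 + (a 1 / a 0) ^ 2, ?_,
      fun x hx hxθ => psd_est a ha ha0 _ hθ0 hθ1 hs0 x hx hxθ⟩
    have h1 : 0 ≤ (B + (a 1 / a 0) * a 1 + (a 1 / a 0) * B) / a 0 :=
      div_nonneg (add_nonneg (add_nonneg hB0 (mul_nonneg hc0 (ha 1)))
        (mul_nonneg hc0 hB0)) ha0.le
    have h2 : 0 ≤ a 1 * (a 1 + B) / a 0 ^ 2 :=
      div_nonneg (mul_nonneg (ha 1) (add_nonneg (ha 1) hB0)) (sq_nonneg _)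
    have h3 : 0 ≤ B / a 0 := div_nonneg hB0 ha0.le
    have h4 : 0 ≤ (a 1 / a 0) ^ 2 := sq_nonneg _
    linarith
  -- continuity of the Poisson pmf in the parameter
  have hcont : Tendsto (fun n : ℕ => poissonPMF (a 1 / a 0 * ∑ i : Fin n, θ n i) m) atTop
      (nhds (poissonPMF (l * a 1 / a 0) m)) := by
    have h1 : Tendsto (fun n : ℕ => a 1 / a 0 * ∑ i : Fin n, θ n i) atTop
        (nhds (a 1 / a 0 * l)) := htot.const_mul _
    have h2 : Continuous fun x : ℝ => poissonPMF x m := by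
      unfold poissonPMF
      exact ((Real.continuous_exp.comp continuous_neg).mul (continuous_pow m)).div_const _
    have h3 := (h2.tendsto (a 1 / a 0 * l)).comp h1
    have h4 : l * a 1 / a 0 = a 1 / a 0 * l := by ring
    rw [h4]
    exact h3
  rw [Metric.tendsto_atTop]
  intro ε hε
  obtain ⟨N1, hN1⟩ := Metric.tendsto_atTop.mp hcont (ε / 2) (by linarith)
  obtain ⟨N2, hN2⟩ := Metric.tendsto_atTop.mp htot 1 one_pos
  have hden : (0 : ℝ) < 2 * (K + 1) * (l + 1) :=
    mul_pos (mul_pos two_pos (by linarith)) (by linarith)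
  have hδ0 : (0 : ℝ) < min (min (r / 2) 1) (ε / (2 * (K + 1) * (l + 1))) :=
    lt_min hθ0 (div_pos hε hden)
  set δ : ℝ := min (min (r / 2) 1) (ε / (2 * (K + 1) * (l + 1))) with hδ_def
  obtain ⟨N3, hN3⟩ := hmax δ hδ0
  refine ⟨max N1 (max N2 N3), fun n hn => ?_⟩
  have hn1 : n ≥ N1 := le_trans (le_max_left _ _) hn
  have hn2 : n ≥ N2 := le_trans (le_trans (le_max_left _ _) (le_max_right _ _)) hn
  have hn3 : n ≥ N3 := le_trans (le_trans (le_max_right _ _) (le_max_right _ _)) hn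
  have hθδ : ∀ i : Fin n, θ n i < δ := hN3 n hn3
  have hθle : ∀ i : Fin n, θ n i ≤ min (r / 2) 1 :=
    fun i => le_trans (hθδ i).le (min_le_left _ _)
  have hesti := fun i : Fin n => hKest (θ n i) (hθpos n i) (hθle i)
  -- apply the convolution bound
  obtain ⟨hcs, hcb⟩ := convN_bound n
    (fun i k => a k * θ n i ^ k / (∑' j : ℕ, a j * θ n i ^ j))
    (fun i => poissonPMF (a 1 / a 0 * θ n i))
    (fun i => (hesti i).1)
    (fun i => poisson_isPMF (mul_nonneg hc0 (hθpos n i).le))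
  have hpoint : |convN (fun i k => a k * θ n i ^ k / (∑' j : ℕ, a j * θ n i ^ j)) m -
      convN (fun i : Fin n => poissonPMF (a 1 / a 0 * θ n i)) m| ≤
      ∑' k, |convN (fun i k => a k * θ n i ^ k / (∑' j : ℕ, a j * θ n i ^ j)) k -
        convN (fun i : Fin n => poissonPMF (a 1 / a 0 * θ n i)) k| :=
    Summable.le_tsum hcs m (fun j _ => abs_nonneg _)
  have hsum_est : ∑ i : Fin n, (∑' k,
      |a k * θ n i ^ k / (∑' j : ℕ, a j * θ n i ^ j) - poissonPMF (a 1 / a 0 * θ n i) k|)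
      ≤ ∑ i : Fin n, K * θ n i ^ 2 :=
    Finset.sum_le_sum fun i _ => (hesti i).2.2
  have hθsum : ∑ i : Fin n, θ n i < l + 1 := by
    have := hN2 n hn2
    rw [Real.dist_eq] at this
    have := abs_lt.mp this
    linarith [this.1, this.2]
  have hθsum0 : 0 ≤ ∑ i : Fin n, θ n i :=
    Finset.sum_nonneg fun i _ => (hθpos n i).le
  have hsum_sq : ∑ i : Fin n, K * θ n i ^ 2 ≤ K * (δ * (l + 1)) := by
    have h1 : ∀ i : Fin n, K * θ n i ^ 2 ≤ K * (δ * θ n i) := by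
      intro i
      apply mul_le_mul_of_nonneg_left _ hK0
      have : θ n i ^ 2 = θ n i * θ n i := sq (θ n i)
      rw [this]
      exact mul_le_mul_of_nonneg_right (hθδ i).le (hθpos n i).le
    calc ∑ i : Fin n, K * θ n i ^ 2 ≤ ∑ i : Fin n, K * (δ * θ n i) :=
          Finset.sum_le_sum fun i _ => h1 i
      _ = K * δ * ∑ i : Fin n, θ n i := by rw [Finset.mul_sum]; ring_nf
      _ ≤ K * δ * (l + 1) :=
          mul_le_mul_of_nonneg_left hθsum.le (mul_nonneg hK0 hδ0.le)
      _ = K * (δ * (l + 1)) := by ring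
  have hhalf : K * (δ * (l + 1)) < ε / 2 := by
    have hδle : δ ≤ ε / (2 * (K + 1) * (l + 1)) := min_le_right _ _
    have h1 : δ * (l + 1) ≤ ε / (2 * (K + 1) * (l + 1)) * (l + 1) :=
      mul_le_mul_of_nonneg_right hδle (by linarith)
    have h2 : ε / (2 * (K + 1) * (l + 1)) * (l + 1) = ε / (2 * (K + 1)) := by
      field_simp
    have h3 : K * (δ * (l + 1)) ≤ K * (ε / (2 * (K + 1))) := by
      rw [← h2]
      exact mul_le_mul_of_nonneg_left h1 hK0
    have h4 : K * (ε / (2 * (K + 1))) < ε / 2 := by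
      rw [mul_div_assoc']
      rw [div_lt_div_iff₀ (by linarith) two_pos]
      nlinarith
    linarith
  -- convN of the Poisson pmfs
  have hconvq : convN (fun i : Fin n => poissonPMF (a 1 / a 0 * θ n i)) =
      poissonPMF (a 1 / a 0 * ∑ i : Fin n, θ n i) := by
    rw [convN_poisson n (fun i => a 1 / a 0 * θ n i), ← Finset.mul_sum]
  rw [Real.dist_eq]
  have htri := abs_sub_le
    (convN (fun i k => a k * θ n i ^ k / (∑' j : ℕ, a j * θ n i ^ j)) m)
    (poissonPMF (a 1 / a 0 * ∑ i : Fin n, θ n i) m)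
    (poissonPMF (l * a 1 / a 0) m)
  have hN1' := hN1 n hn1
  rw [Real.dist_eq] at hN1'
  calc |convN (fun i k => a k * θ n i ^ k / (∑' j : ℕ, a j * θ n i ^ j)) m -
        poissonPMF (l * a 1 / a 0) m|
      ≤ |convN (fun i k => a k * θ n i ^ k / (∑' j : ℕ, a j * θ n i ^ j)) m -
          convN (fun i : Fin n => poissonPMF (a 1 / a 0 * θ n i)) m| +
        |poissonPMF (a 1 / a 0 * ∑ i : Fin n, θ n i) m - poissonPMF (l * a 1 / a 0) m| := by
        rw [hconvq]
        exact htri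
    _ < ε / 2 + ε / 2 := by
        apply add_lt_add_of_le_of_lt _ hN1'
        calc |convN (fun i k => a k * θ n i ^ k / (∑' j : ℕ, a j * θ n i ^ j)) m -
            convN (fun i : Fin n => poissonPMF (a 1 / a 0 * θ n i)) m|
            ≤ ∑' k, |convN (fun i k => a k * θ n i ^ k / (∑' j : ℕ, a j * θ n i ^ j)) k -
              convN (fun i : Fin n => poissonPMF (a 1 / a 0 * θ n i)) k| := hpoint
          _ ≤ ∑ i : Fin n, (∑' k, |a k * θ n i ^ k / (∑' j : ℕ, a j * θ n i ^ j) -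
              poissonPMF (a 1 / a 0 * θ n i) k|) := hcb
          _ ≤ ∑ i : Fin n, K * θ n i ^ 2 := hsum_est
          _ ≤ K * (δ * (l + 1)) := hsum_sq
          _ ≤ ε / 2 := hhalf.le
    _ = ε := by ring
end
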